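/- arXiv:2105.05555 — 3 statements merged into one kernel-verified Lean document; each statement's English description precedes it below -/
import Mathlib

section
/- Let P be a Bayesian network on {0,1}^d with conditional probability table p and parental configuration probabilities π^P. For X ∼ P, the covariance matrix of f(X,p) is the diagonal matrix diag(π^P ∘ p ∘ (1−p)). -/
open Finset

/-- The index set of the conditional probability table: pairs `(i, a)` where
`a` is an assignment of Boolean values to the parents of node `i`. -/
abbrev BNConf {d : ℕ} (parent : Fin d → Finset (Fin d)) : Type :=
  (i : Fin d) × ({j // j ∈ parent i} → Bool)

/-- The parental configuration of node `i` realized by the sample `x`. -/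
def bnRestrict {d : ℕ} (parent : Fin d → Finset (Fin d)) (x : Fin d → Bool)
    (i : Fin d) : {j // j ∈ parent i} → Bool :=
  fun j => x j.1

/-- The probability that a Bayesian network with structure `parent` and
conditional probability table `p` assigns to the outcome `x ∈ {0,1}^d`. -/
def bnWeight {d : ℕ} (parent : Fin d → Finset (Fin d))
    (p : BNConf parent → ℝ) (x : Fin d → Bool) : ℝ :=
  ∏ i : Fin d,
    (if x i then p ⟨i, bnRestrict parent x i⟩ else 1 - p ⟨i, bnRestrict parent x i⟩)

/-- The expanded vector `f(x, p)`. -/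
def bnF {d : ℕ} (parent : Fin d → Finset (Fin d)) (p : BNConf parent → ℝ)
    (x : Fin d → Bool) (k : BNConf parent) : ℝ :=
  if bnRestrict parent x k.1 = k.2 then (if x k.1 then 1 else 0) - p k else 0

/-- The parental configuration probabilities `π^P`. -/
def bnPi {d : ℕ} (parent : Fin d → Finset (Fin d)) (p : BNConf parent → ℝ)
    (k : BNConf parent) : ℝ :=
  ∑ x : Fin d → Bool,
    if bnRestrict parent x k.1 = k.2 then bnWeight parent p x else 0

/-! ### Auxiliary machinery -/

def bnFac {d : ℕ} (parent : Fin d → Finset (Fin d)) (p : BNConf parent → ℝ)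
    (x : Fin d → Bool) (m : Fin d) : ℝ :=
  if x m then p ⟨m, bnRestrict parent x m⟩ else 1 - p ⟨m, bnRestrict parent x m⟩

lemma bnWeight_eq_prod {d : ℕ} (parent : Fin d → Finset (Fin d)) (p : BNConf parent → ℝ)
    (x : Fin d → Bool) : bnWeight parent p x = ∏ m, bnFac parent p x m := rfl

def bnPF {d : ℕ} (parent : Fin d → Finset (Fin d)) (p : BNConf parent → ℝ)
    (t : ℕ) (x : Fin d → Bool) : ℝ :=
  ∏ m ∈ univ.filter (fun m : Fin d => (m : ℕ) < t), bnFac parent p x m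

lemma bnRestrict_update {d : ℕ} {parent : Fin d → Finset (Fin d)} {i t : Fin d}
    (h : t ∉ parent i) (x : Fin d → Bool) (b : Bool) :
    bnRestrict parent (Function.update x t b) i = bnRestrict parent x i := by
  funext j
  have hjt : (j : Fin d) ≠ t := by
    intro hj
    exact h (hj ▸ j.2)
  exact Function.update_of_ne hjt _ _

lemma bnFac_update {d : ℕ} {parent : Fin d → Finset (Fin d)} (p : BNConf parent → ℝ)
    {m t : Fin d} (hm : t ≠ m) (h : t ∉ parent m) (x : Fin d → Bool) (b : Bool) :
    bnFac parent p (Function.update x t b) m = bnFac parent p x m := by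
  unfold bnFac
  rw [bnRestrict_update h, Function.update_of_ne hm.symm]

lemma bnF_update {d : ℕ} {parent : Fin d → Finset (Fin d)} (p : BNConf parent → ℝ)
    {k : BNConf parent} {t : Fin d} (hm : t ≠ k.1) (h : t ∉ parent k.1)
    (x : Fin d → Bool) (b : Bool) :
    bnF parent p (Function.update x t b) k = bnF parent p x k := by
  unfold bnF
  rw [bnRestrict_update h, Function.update_of_ne hm.symm]

lemma bn_notpar {d : ℕ} {parent : Fin d → Finset (Fin d)}
    (htopo : ∀ i : Fin d, ∀ j ∈ parent i, (j : ℕ) < (i : ℕ))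
    {i t : Fin d} (h : (i : ℕ) ≤ (t : ℕ)) : t ∉ parent i :=
  fun ht => absurd (htopo i t ht) (not_lt.2 h)

lemma bnPF_update {d : ℕ} {parent : Fin d → Finset (Fin d)}
    (htopo : ∀ i : Fin d, ∀ j ∈ parent i, (j : ℕ) < (i : ℕ)) (p : BNConf parent → ℝ)
    {t : ℕ} {tf : Fin d} (ht : t ≤ (tf : ℕ)) (x : Fin d → Bool) (b : Bool) :
    bnPF parent p t (Function.update x tf b) = bnPF parent p t x := by
  refine Finset.prod_congr rfl fun m hm => ?_
  rw [mem_filter] at hm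
  have hmt : (m : ℕ) < (tf : ℕ) := lt_of_lt_of_le hm.2 ht
  exact bnFac_update p (fun h => absurd (congrArg Fin.val h.symm) (ne_of_lt hmt))
    (bn_notpar htopo (le_of_lt hmt)) x b

lemma bn_sum_split {d : ℕ} (t : Fin d) (H : (Fin d → Bool) → ℝ) :
    2 * ∑ x, H x = ∑ x, (H (Function.update x t false) + H (Function.update x t true)) := by
  classical
  set e := Equiv.funSplitAt t Bool with he_def
  have he : ∀ (b : Bool) (y : Bool × ({j : Fin d // j ≠ t} → Bool)),
      Function.update (e.symm y) t b = e.symm (b, y.2) := by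
    intro b y
    funext j
    rcases eq_or_ne j t with rfl | hj
    · simp [he_def, Equiv.funSplitAt, Function.update_self]
    · simp [he_def, Equiv.funSplitAt, Function.update_of_ne hj, hj]
  have h1 : ∀ G : (Fin d → Bool) → ℝ, ∑ x, G x = ∑ y : Bool × ({j : Fin d // j ≠ t} → Bool),
      G (e.symm y) := fun G => (Equiv.sum_comp e.symm G).symm
  rw [h1 (fun x => H (Function.update x t false) + H (Function.update x t true)), h1 H]
  simp only [he]
  rw [Fintype.sum_prod_type, Fintype.sum_prod_type, Fintype.sum_bool]
  simp only [Finset.sum_add_distrib, Fintype.sum_bool]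
  ring

lemma bnPeel {d : ℕ} {parent : Fin d → Finset (Fin d)}
    (htopo : ∀ i : Fin d, ∀ j ∈ parent i, (j : ℕ) < (i : ℕ)) (p : BNConf parent → ℝ) :
    ∀ (t : ℕ), t ≤ d → ∀ g : (Fin d → Bool) → ℝ,
    (∀ s : Fin d, t ≤ (s : ℕ) → ∀ x b, g (Function.update x s b) = g x) →
    (2:ℝ)^(d - t) * ∑ x, bnWeight parent p x * g x = ∑ x, bnPF parent p t x * g x := by
  intro t
  induction' hn : d - t with n ih generalizing t
  · intro htd g _hg
    have : t = d := by omega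
    subst this
    rw [pow_zero, one_mul]
    refine Finset.sum_congr rfl fun x _ => ?_
    congr 1
    rw [bnWeight_eq_prod]
    refine (Finset.prod_congr ?_ fun _ _ => rfl)
    ext m
    simp [m.isLt]
  · intro htd g hg
    have htd' : t < d := by omega
    have ih' := ih (t+1) (by omega) (by omega) g (fun s hs x b => hg s (by omega) x b)
    set tf : Fin d := ⟨t, htd'⟩ with htf
    have hstep : ∑ x, bnPF parent p t x * g x = 2 * ∑ x, bnPF parent p (t+1) x * g x := by
      rw [bn_sum_split tf (fun x => bnPF parent p (t+1) x * g x)]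
      refine Finset.sum_congr rfl fun x _ => ?_
      have hfilter : (univ.filter fun m : Fin d => (m : ℕ) < t + 1)
          = insert tf (univ.filter fun m : Fin d => (m : ℕ) < t) := by
        ext m
        simp only [mem_filter, mem_univ, true_and, mem_insert, Fin.ext_iff]
        show (m : ℕ) < t + 1 ↔ (m : ℕ) = t ∨ (m : ℕ) < t
        omega
      have hPF : ∀ y, bnPF parent p (t+1) y = bnFac parent p y tf * bnPF parent p t y := by
        intro y
        simp only [bnPF, hfilter]
        rw [Finset.prod_insert (by simp [htf])]
      have hq : ∀ b : Bool, bnFac parent p (Function.update x tf b) tf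
          = if b then p ⟨tf, bnRestrict parent x tf⟩
            else 1 - p ⟨tf, bnRestrict parent x tf⟩ := by
        intro b
        simp only [bnFac, Function.update_self,
          bnRestrict_update (bn_notpar htopo (le_refl (tf : ℕ)))]
      have hPFt : ∀ b, bnPF parent p t (Function.update x tf b) = bnPF parent p t x :=
        fun b => bnPF_update htopo p le_rfl x b
      have hgup : ∀ b, g (Function.update x tf b) = g x := fun b => hg tf le_rfl x b
      simp only [hPF, hq, hPFt, hgup, if_true, if_false, Bool.false_eq_true]
      ring
    rw [hstep, ← ih', pow_succ]
    ring

lemma bnPF_succ {d : ℕ} {parent : Fin d → Finset (Fin d)} (p : BNConf parent → ℝ)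
    (i : Fin d) (y : Fin d → Bool) :
    bnPF parent p ((i : ℕ)+1) y = bnFac parent p y i * bnPF parent p (i : ℕ) y := by
  have hfilter : (univ.filter fun m : Fin d => (m : ℕ) < (i : ℕ) + 1)
      = insert i (univ.filter fun m : Fin d => (m : ℕ) < (i : ℕ)) := by
    ext m
    simp only [mem_filter, mem_univ, true_and, mem_insert, Fin.ext_iff]
    omega
  simp only [bnPF, hfilter]
  rw [Finset.prod_insert (by simp)]

lemma bnFac_self_update {d : ℕ} {parent : Fin d → Finset (Fin d)}
    (htopo : ∀ i : Fin d, ∀ j ∈ parent i, (j : ℕ) < (i : ℕ)) (p : BNConf parent → ℝ)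
    (x : Fin d → Bool) (i : Fin d) (b : Bool) :
    bnFac parent p (Function.update x i b) i
      = if b then p ⟨i, bnRestrict parent x i⟩ else 1 - p ⟨i, bnRestrict parent x i⟩ := by
  simp only [bnFac, Function.update_self,
    bnRestrict_update (bn_notpar htopo (le_refl (i : ℕ)))]

lemma bnF_self_update {d : ℕ} {parent : Fin d → Finset (Fin d)}
    (htopo : ∀ i : Fin d, ∀ j ∈ parent i, (j : ℕ) < (i : ℕ)) (p : BNConf parent → ℝ)
    (x : Fin d → Bool) (i : Fin d) (a : {j // j ∈ parent i} → Bool) (b : Bool) :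
    bnF parent p (Function.update x i b) ⟨i, a⟩
      = if bnRestrict parent x i = a then (if b then 1 else 0) - p ⟨i, a⟩ else 0 := by
  simp only [bnF, Function.update_self,
    bnRestrict_update (bn_notpar htopo (le_refl (i : ℕ)))]

lemma bnZero {d : ℕ} {parent : Fin d → Finset (Fin d)}
    (htopo : ∀ i : Fin d, ∀ j ∈ parent i, (j : ℕ) < (i : ℕ)) (p : BNConf parent → ℝ)
    (k : BNConf parent) (h : (Fin d → Bool) → ℝ)
    (hh : ∀ s : Fin d, (k.1 : ℕ) ≤ (s : ℕ) → ∀ x b, h (Function.update x s b) = h x) :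
    ∑ x, bnWeight parent p x * (bnF parent p x k * h x) = 0 := by
  obtain ⟨i, a⟩ := k
  dsimp only at hh
  have hid : (i : ℕ) + 1 ≤ d := i.isLt
  set g : (Fin d → Bool) → ℝ := fun x => bnF parent p x ⟨i, a⟩ * h x with hg_def
  have hginv : ∀ s : Fin d, (i : ℕ) + 1 ≤ (s : ℕ) → ∀ x b,
      g (Function.update x s b) = g x := by
    intro s hs x b
    simp only [hg_def]
    have hsne : s ≠ i := Fin.ne_of_val_ne (by omega)
    have hsnp : s ∉ parent i := bn_notpar htopo (by omega : (i : ℕ) ≤ (s : ℕ))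
    rw [bnF_update p hsne hsnp, hh s (by omega)]
  have hpeel := bnPeel htopo p ((i : ℕ) + 1) hid g hginv
  have hS : ∑ x, bnPF parent p ((i : ℕ) + 1) x * g x = 0 := by
    have h2 : 2 * ∑ x, bnPF parent p ((i : ℕ) + 1) x * g x = 0 := by
      rw [bn_sum_split i (fun x => bnPF parent p ((i : ℕ) + 1) x * g x)]
      refine Finset.sum_eq_zero fun x _ => ?_
      simp only [hg_def, bnPF_succ, bnFac_self_update htopo, bnF_self_update htopo,
        bnPF_update htopo p (le_refl (i : ℕ)), hh i (le_refl (i : ℕ)),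
        if_true, if_false, Bool.false_eq_true]
      rcases eq_or_ne (bnRestrict parent x i) a with hra | hra
      · rw [hra]
        simp
        ring
      · simp only [if_neg hra]
        ring
    linarith
  rw [hS] at hpeel
  have h2 : ((2:ℝ) ^ (d - ((i : ℕ) + 1))) ≠ 0 := pow_ne_zero _ two_ne_zero
  have := mul_eq_zero.mp hpeel
  tauto

lemma bnDiag {d : ℕ} {parent : Fin d → Finset (Fin d)}
    (htopo : ∀ i : Fin d, ∀ j ∈ parent i, (j : ℕ) < (i : ℕ)) (p : BNConf parent → ℝ)
    (k : BNConf parent) :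
    ∑ x, bnWeight parent p x * (bnF parent p x k * bnF parent p x k)
      = bnPi parent p k * (p k * (1 - p k)) := by
  obtain ⟨i, a⟩ := k
  have hid : (i : ℕ) + 1 ≤ d := i.isLt
  set g : (Fin d → Bool) → ℝ := fun x => bnF parent p x ⟨i, a⟩ * bnF parent p x ⟨i, a⟩
    with hg_def
  set ind : (Fin d → Bool) → ℝ := fun x => if bnRestrict parent x i = a then (1:ℝ) else 0
    with hind_def
  have hginv : ∀ s : Fin d, (i : ℕ) + 1 ≤ (s : ℕ) → ∀ x b,
      g (Function.update x s b) = g x := by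
    intro s hs x b
    have hsne : s ≠ i := Fin.ne_of_val_ne (by omega)
    have hsnp : s ∉ parent i := bn_notpar htopo (by omega : (i : ℕ) ≤ (s : ℕ))
    simp only [hg_def]
    rw [bnF_update p hsne hsnp]
  have hindinv : ∀ s : Fin d, (i : ℕ) ≤ (s : ℕ) → ∀ x b,
      ind (Function.update x s b) = ind x := by
    intro s hs x b
    simp only [hind_def, bnRestrict_update (bn_notpar htopo hs)]
  have hpeel := bnPeel htopo p ((i : ℕ) + 1) hid g hginv
  have hpeel2 := bnPeel htopo p (i : ℕ) (by omega) ind hindinv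
  have hPi : ∑ x, bnWeight parent p x * ind x = bnPi parent p ⟨i, a⟩ := by
    refine Finset.sum_congr rfl fun x _ => ?_
    simp only [hind_def, mul_ite, mul_one, mul_zero]
  have hsplit : 2 * ∑ x, bnPF parent p ((i : ℕ) + 1) x * g x
      = ∑ x, bnPF parent p (i : ℕ) x * (p ⟨i, a⟩ * (1 - p ⟨i, a⟩) * ind x) := by
    rw [bn_sum_split i (fun x => bnPF parent p ((i : ℕ) + 1) x * g x)]
    refine Finset.sum_congr rfl fun x _ => ?_
    simp only [hg_def, hind_def, bnPF_succ, bnFac_self_update htopo, bnF_self_update htopo,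
      bnPF_update htopo p (le_refl (i : ℕ)), if_true, if_false, Bool.false_eq_true]
    rcases eq_or_ne (bnRestrict parent x i) a with hra | hra
    · rw [hra]
      simp
      ring
    · simp only [if_neg hra, mul_zero]
      ring
  have hmulsum : ∑ x, bnPF parent p (i : ℕ) x * (p ⟨i, a⟩ * (1 - p ⟨i, a⟩) * ind x)
      = p ⟨i, a⟩ * (1 - p ⟨i, a⟩) * ∑ x, bnPF parent p (i : ℕ) x * ind x := by
    rw [Finset.mul_sum]
    exact Finset.sum_congr rfl fun x _ => by ring
  have hexp : d - (i : ℕ) = (d - ((i : ℕ) + 1)) + 1 := by omega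
  have key : (2:ℝ) * ((2:ℝ) ^ (d - ((i : ℕ) + 1)) * ∑ x, bnWeight parent p x * g x)
      = (2:ℝ) * ((2:ℝ) ^ (d - ((i : ℕ) + 1))
          * (bnPi parent p ⟨i, a⟩ * (p ⟨i, a⟩ * (1 - p ⟨i, a⟩)))) := by
    rw [hpeel, hsplit, hmulsum, ← hpeel2, ← hPi, hexp, pow_succ]
    ring
  have k1 := mul_left_cancel₀ (two_ne_zero : (2:ℝ) ≠ 0) key
  have k2 := mul_left_cancel₀ (pow_ne_zero (d - ((i : ℕ) + 1)) (two_ne_zero : (2:ℝ) ≠ 0)) k1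
  exact k2

/-- For a Bayesian network `P` on `{0,1}^d` with conditional probability table
`p` and parental configuration probabilities `π^P`, the covariance matrix of
`f(X, p)` (for `X ∼ P`) equals the diagonal matrix
`diag(π^P ∘ p ∘ (1 - p))`. -/
theorem bn_f_cov_diagonal (d : ℕ) (parent : Fin d → Finset (Fin d))
    (htopo : ∀ i : Fin d, ∀ j ∈ parent i, (j : ℕ) < (i : ℕ))
    (p : BNConf parent → ℝ) (hp : ∀ k, 0 ≤ p k ∧ p k ≤ 1) :
    (Matrix.of fun k l : BNConf parent =>
        (∑ x : Fin d → Bool,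
            bnWeight parent p x * bnF parent p x k * bnF parent p x l) -
          (∑ x : Fin d → Bool, bnWeight parent p x * bnF parent p x k) *
            (∑ x : Fin d → Bool, bnWeight parent p x * bnF parent p x l)) =
      Matrix.diagonal (fun k => bnPi parent p k * p k * (1 - p k)) := by
  have hmean : ∀ k : BNConf parent, ∑ x, bnWeight parent p x * bnF parent p x k = 0 := by
    intro k
    have := bnZero htopo p k (fun _ => 1) (fun s hs x b => rfl)
    simpa using this
  have hcross : ∀ k l : BNConf parent, (l.1 : ℕ) < (k.1 : ℕ) →
      ∑ x, bnWeight parent p x * bnF parent p x k * bnF parent p x l = 0 := by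
    intro k l hlk
    have hinv : ∀ s : Fin d, (k.1 : ℕ) ≤ (s : ℕ) → ∀ x b,
        bnF parent p (Function.update x s b) l = bnF parent p x l := by
      intro s hs x b
      have h1 : s ≠ l.1 := Fin.ne_of_val_ne (by omega)
      exact bnF_update p h1 (bn_notpar htopo (by omega)) x b
    have h0 := bnZero htopo p k (fun x => bnF parent p x l) hinv
    rw [← h0]
    exact Finset.sum_congr rfl fun x _ => by ring
  ext k l
  simp only [Matrix.of_apply]
  rw [hmean k, hmean l, zero_mul, sub_zero]
  rcases eq_or_ne k l with rfl | hkl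
  · rw [Matrix.diagonal_apply_eq]
    rw [show bnPi parent p k * p k * (1 - p k)
        = bnPi parent p k * (p k * (1 - p k)) from by ring, ← bnDiag htopo p k]
    exact Finset.sum_congr rfl fun x _ => by ring
  · rw [Matrix.diagonal_apply_ne _ hkl]
    obtain ⟨i, a⟩ := k
    obtain ⟨j, b⟩ := l
    rcases lt_trichotomy (i : ℕ) (j : ℕ) with hij | hij | hij
    · rw [← hcross ⟨j, b⟩ ⟨i, a⟩ hij]
      exact Finset.sum_congr rfl fun x _ => by ring
    · have : i = j := Fin.ext hij
      subst this
      have hab : a ≠ b := fun h => hkl (by rw [h])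
      refine Finset.sum_eq_zero fun x _ => ?_
      simp only [bnF]
      by_cases hra : bnRestrict parent x i = a
      · have hrb : bnRestrict parent x i ≠ b := fun h => hab (hra.symm.trans h)
        rw [if_neg hrb]
        ring
      · rw [if_neg hra]
        ring
    · exact hcross ⟨i, a⟩ ⟨j, b⟩ hij
end

section
/- Let S be a finite set of N vectors in ℝ^d with mean μ(S), and suppose S is (ε,β,γ)-stable with respect to a distribution with mean μ: for every T ⊆ S with |T| ≥ (1−2ε)N, ‖(1/|T|)∑_{x∈T}(x−μ)‖₂ ≤ β and ‖(1/|T|)∑_{x∈T}(x−μ)(x−μ)^⊤ − I‖₂ ≤ γ. Then for any subset T ⊆ S with |T| = 2εN, ‖(1/|T|)∑_{x∈T} x − μ‖₂ ≤ β/ε. -/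
open Finset

/-- The spectral norm (operator 2-norm) of a square real matrix. -/
noncomputable def specNorm {n : Type*} [Fintype n] [DecidableEq n]
    (C : Matrix n n ℝ) : ℝ :=
  ‖Matrix.toEuclideanCLM (𝕜 := ℝ) C‖

/-- The empirical second-moment matrix of `T`, centered at `μ`. -/
noncomputable def secondMoment {d : ℕ} (T : Finset (EuclideanSpace ℝ (Fin d)))
    (μ : EuclideanSpace ℝ (Fin d)) : Matrix (Fin d) (Fin d) ℝ :=
  (T.card : ℝ)⁻¹ • ∑ x ∈ T, Matrix.vecMulVec (fun i => x i - μ i) (fun i => x i - μ i)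

/-- If `S` is `(ε, β, γ)`-stable with respect to mean `μ`, then for any subset
`T ⊆ S` with `|T| = 2εN`, the empirical mean of `T` is within `β/ε` of `μ`. -/
theorem stability_small_subset_mean (d : ℕ) (ε β γ : ℝ)
    (hε : 0 < ε) (hε' : ε < 1 / 2)
    (S : Finset (EuclideanSpace ℝ (Fin d))) (hS : 0 < S.card)
    (μ : EuclideanSpace ℝ (Fin d))
    (hstab : ∀ T ⊆ S, (1 - 2 * ε) * (S.card : ℝ) ≤ (T.card : ℝ) →
      ‖(T.card : ℝ)⁻¹ • ∑ x ∈ T, (x - μ)‖ ≤ β ∧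
      specNorm (secondMoment T μ - 1) ≤ γ) :
    ∀ T ⊆ S, (T.card : ℝ) = 2 * ε * (S.card : ℝ) →
      ‖((T.card : ℝ)⁻¹ • ∑ x ∈ T, x) - μ‖ ≤ β / ε := by
  classical
  intro T hTS hTcard
  have hNpos : (0:ℝ) < S.card := by exact_mod_cast hS
  have hTpos : (0:ℝ) < T.card := by rw [hTcard]; positivity
  have hTne : (T.card:ℝ) ≠ 0 := ne_of_gt hTpos
  have hUcard : (((S \ T).card) : ℝ) = (1 - 2*ε) * S.card := by
    have hc : (S \ T).card = S.card - T.card := Finset.card_sdiff_of_subset hTS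
    have hle : T.card ≤ S.card := Finset.card_le_card hTS
    rw [hc, Nat.cast_sub hle, hTcard]; ring
  have hUpos : (0:ℝ) < ((S \ T).card : ℝ) := by rw [hUcard]; nlinarith
  have hUne : (((S \ T).card):ℝ) ≠ 0 := ne_of_gt hUpos
  obtain ⟨hSb, -⟩ := hstab S subset_rfl (by nlinarith)
  obtain ⟨hUb, -⟩ := hstab (S \ T) Finset.sdiff_subset (le_of_eq hUcard.symm)
  have hβ : 0 ≤ β := le_trans (norm_nonneg _) hSb
  have hsum : ∑ x ∈ T, (x - μ) = ∑ x ∈ S, (x - μ) - ∑ x ∈ S \ T, (x - μ) := by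
    rw [eq_sub_iff_add_eq, add_comm, Finset.sum_sdiff hTS]
  have h1 : (T.card:ℝ)⁻¹ • ∑ x ∈ T, (x - μ) = (T.card:ℝ)⁻¹ • ∑ x ∈ T, x - μ := by
    rw [Finset.sum_sub_distrib, smul_sub, Finset.sum_const, ← Nat.cast_smul_eq_nsmul ℝ,
      smul_smul, inv_mul_cancel₀ hTne, one_smul]
  have hs1 : ((S.card:ℝ)/T.card) * (S.card:ℝ)⁻¹ = (T.card:ℝ)⁻¹ := by
    field_simp
  have hs2 : (((S \ T).card:ℝ)/T.card) * ((S \ T).card:ℝ)⁻¹ = (T.card:ℝ)⁻¹ := by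
    field_simp
  have keq : (T.card:ℝ)⁻¹ • ∑ x ∈ T, x - μ
      = ((S.card:ℝ)/T.card) • ((S.card:ℝ)⁻¹ • ∑ x ∈ S, (x - μ))
        - (((S \ T).card:ℝ)/T.card) • (((S \ T).card:ℝ)⁻¹ • ∑ x ∈ S \ T, (x - μ)) := by
    rw [smul_smul, smul_smul, hs1, hs2, ← smul_sub, ← hsum, h1]
  rw [keq]
  have hnn1 : (0:ℝ) ≤ (S.card:ℝ)/T.card := by positivity
  have hnn2 : (0:ℝ) ≤ ((S \ T).card:ℝ)/T.card := by positivity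
  calc ‖((S.card:ℝ)/T.card) • ((S.card:ℝ)⁻¹ • ∑ x ∈ S, (x - μ))
        - (((S \ T).card:ℝ)/T.card) • (((S \ T).card:ℝ)⁻¹ • ∑ x ∈ S \ T, (x - μ))‖
      ≤ ‖((S.card:ℝ)/T.card) • ((S.card:ℝ)⁻¹ • ∑ x ∈ S, (x - μ))‖
        + ‖(((S \ T).card:ℝ)/T.card) • (((S \ T).card:ℝ)⁻¹ • ∑ x ∈ S \ T, (x - μ))‖ :=
      norm_sub_le _ _
    _ = ((S.card:ℝ)/T.card) * ‖(S.card:ℝ)⁻¹ • ∑ x ∈ S, (x - μ)‖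
        + (((S \ T).card:ℝ)/T.card) * ‖((S \ T).card:ℝ)⁻¹ • ∑ x ∈ S \ T, (x - μ)‖ := by
      simp only [norm_smul, Real.norm_eq_abs, abs_of_nonneg hnn1, abs_of_nonneg hnn2]
    _ ≤ ((S.card:ℝ)/T.card) * β + (((S \ T).card:ℝ)/T.card) * β := by
      exact add_le_add (mul_le_mul_of_nonneg_left hSb hnn1)
        (mul_le_mul_of_nonneg_left hUb hnn2)
    _ ≤ β / ε := by
      rw [hTcard, hUcard]
      have h1 : (S.card:ℝ) / (2*ε*S.card) = 1/(2*ε) := by field_simp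
      have h2 : (1 - 2*ε) * (S.card:ℝ) / (2*ε*S.card) = (1-2*ε)/(2*ε) := by
        field_simp
      rw [h1, h2]
      have heq : 1/(2*ε) * β + (1-2*ε)/(2*ε) * β = (1-ε)*β/ε := by
        field_simp; ring
      rw [heq]
      have hle : (1-ε)*β ≤ β := by
        have := mul_le_mul_of_nonneg_right (show (1-ε) ≤ 1 by linarith) hβ
        linarith
      exact div_le_div_of_nonneg_right hle hε.le
end

section
/- Let S be a finite set of N vectors in ℝ^d that is (ε,β,γ)-stable with respect to mean μ (as in Definition of stability). Then for any T ⊆ S with |T| = 2εN, ‖(1/|T|)∑_{x∈T}(x−μ)(x−μ)^⊤ − I‖₂ ≤ γ/ε. -/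
set_option synthInstance.maxHeartbeats 1000000

open Finset

lemma specNorm_nonneg {n : Type*} [Fintype n] [DecidableEq n] (C : Matrix n n ℝ) :
    0 ≤ specNorm C := norm_nonneg _

lemma specNorm_smul {n : Type*} [Fintype n] [DecidableEq n] (c : ℝ) (C : Matrix n n ℝ) :
    specNorm (c • C) = |c| * specNorm C := by
  unfold specNorm
  rw [map_smul, show |c| = ‖c‖ from rfl]
  exact norm_smul c (Matrix.toEuclideanCLM (𝕜 := ℝ) C :
    EuclideanSpace ℝ n →L[ℝ] EuclideanSpace ℝ n)

lemma specNorm_sub_le {n : Type*} [Fintype n] [DecidableEq n] (A B : Matrix n n ℝ) :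
    specNorm (A - B) ≤ specNorm A + specNorm B := by
  unfold specNorm
  rw [map_sub]
  exact norm_sub_le _ _

/-- If `S` is `(ε, β, γ)`-stable with respect to mean `μ`, then for any subset
`T ⊆ S` with `|T| = 2εN`, the centered empirical second moment of `T` is within
`γ/ε` of the identity in spectral norm. -/
theorem stability_small_subset_cov (d : ℕ) (ε β γ : ℝ)
    (hε : 0 < ε) (hε' : ε < 1 / 2)
    (S : Finset (EuclideanSpace ℝ (Fin d))) (hS : 0 < S.card)
    (μ : EuclideanSpace ℝ (Fin d))
    (hstab : ∀ T ⊆ S, (1 - 2 * ε) * (S.card : ℝ) ≤ (T.card : ℝ) →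
      ‖(T.card : ℝ)⁻¹ • ∑ x ∈ T, (x - μ)‖ ≤ β ∧
      specNorm (secondMoment T μ - 1) ≤ γ) :
    ∀ T ⊆ S, (T.card : ℝ) = 2 * ε * (S.card : ℝ) →
      specNorm (secondMoment T μ - 1) ≤ γ / ε := by
  classical
  intro T hT hcard
  have hNpos : (0:ℝ) < (S.card : ℝ) := Nat.cast_pos.mpr hS
  have hmpos : (0:ℝ) < (T.card : ℝ) := by rw [hcard]; positivity
  have hTS : T.card ≤ S.card := card_le_card hT
  have hkcard : ((S \ T).card : ℝ) = (S.card : ℝ) - (T.card : ℝ) := by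
    rw [card_sdiff_of_subset hT]; push_cast [hTS]; ring
  have hkpos : (0:ℝ) < ((S \ T).card : ℝ) := by
    rw [hkcard, hcard]; nlinarith
  have hγS := (hstab S le_rfl (by nlinarith)).2
  have hcond : (1 - 2 * ε) * (S.card : ℝ) ≤ ((S \ T).card : ℝ) := by
    rw [hkcard, hcard]; ring_nf; nlinarith
  have hγK := (hstab (S \ T) sdiff_subset hcond).2
  have hγ0 : 0 ≤ γ := le_trans (specNorm_nonneg _) hγS
  have key : (T.card : ℝ) • (secondMoment T μ - 1)
      = (S.card : ℝ) • (secondMoment S μ - 1)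
        - ((S \ T).card : ℝ) • (secondMoment (S \ T) μ - 1) := by
    have hsum : (∑ x ∈ S \ T, Matrix.vecMulVec (fun i => x i - μ i) (fun i => x i - μ i))
        + ∑ x ∈ T, Matrix.vecMulVec (fun i => x i - μ i) (fun i => x i - μ i)
        = ∑ x ∈ S, Matrix.vecMulVec (fun i => x i - μ i) (fun i => x i - μ i) :=
      sum_sdiff hT
    simp only [secondMoment, smul_sub, smul_inv_smul₀ hmpos.ne',
      smul_inv_smul₀ hkpos.ne', smul_inv_smul₀ hNpos.ne']
    rw [← hsum, hkcard]
    module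
  have h1 : (T.card : ℝ) * specNorm (secondMoment T μ - 1)
      ≤ (S.card : ℝ) * γ + ((S \ T).card : ℝ) * γ := by
    calc (T.card : ℝ) * specNorm (secondMoment T μ - 1)
        = specNorm ((T.card : ℝ) • (secondMoment T μ - 1)) := by
          rw [specNorm_smul, abs_of_pos hmpos]
      _ = specNorm ((S.card : ℝ) • (secondMoment S μ - 1)
            - ((S \ T).card : ℝ) • (secondMoment (S \ T) μ - 1)) := by rw [key]
      _ ≤ specNorm ((S.card : ℝ) • (secondMoment S μ - 1))
            + specNorm (((S \ T).card : ℝ) • (secondMoment (S \ T) μ - 1)) :=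
          specNorm_sub_le _ _
      _ ≤ (S.card : ℝ) * γ + ((S \ T).card : ℝ) * γ := by
          rw [specNorm_smul, specNorm_smul, abs_of_pos hNpos, abs_of_pos hkpos]
          gcongr
  rw [le_div_iff₀ hε]
  nlinarith [specNorm_nonneg (secondMoment T μ - 1), hkcard, hcard, hNpos]
end
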